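/- Initial-condition independence of liminf-boundedness for the deterministic Riccati recursion: for any deterministic binary sequence z and any two positive semidefinite initial matrices Σ₁ and Σ₂, liminf_{k→∞} Tr(P_k^{Σ₁}) < ∞ if and only if liminf_{k→∞} Tr(P_k^{Σ₂}) < ∞. (Equivalently: if liminf_{k→∞} Tr(P_k) = ∞ for some positive semidefinite initial condition then it equals ∞ for all, and if liminf_{k→∞} Tr(P_k) < ∞ for some positive semidefinite initial condition then it is finite for all.) -/

import Mathlib

open Filter Matrix

noncomputable section

/-- The operator `h(X) = A X Aᵀ + Q`. -/
def hOp {n : ℕ} (A Q : Matrix (Fin n) (Fin n) ℝ) (X : Matrix (Fin n) (Fin n) ℝ) :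
    Matrix (Fin n) (Fin n) ℝ :=
  A * X * Aᵀ + Q

/-- The operator `g(X) = A X Aᵀ + Q − A X Cᵀ (C X Cᵀ + R)⁻¹ C X Aᵀ`. -/
def gOp {n m : ℕ} (A Q : Matrix (Fin n) (Fin n) ℝ) (C : Matrix (Fin m) (Fin n) ℝ)
    (R : Matrix (Fin m) (Fin m) ℝ) (X : Matrix (Fin n) (Fin n) ℝ) :
    Matrix (Fin n) (Fin n) ℝ :=
  A * X * Aᵀ + Q - A * X * Cᵀ * (C * X * Cᵀ + R)⁻¹ * (C * X * Aᵀ)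

/-- The stacked observability matrix `[C; CA; …; CA^(k−1)]`. -/
def obsMat {n m : ℕ} (C : Matrix (Fin m) (Fin n) ℝ) (A : Matrix (Fin n) (Fin n) ℝ) (k : ℕ) :
    Matrix (Fin k × Fin m) (Fin n) ℝ :=
  fun p j => (C * A ^ (p.1 : ℕ)) p.2 j

/-- The controllability matrix `[S, AS, …, A^(n−1) S]`. -/
def ctrbMat {n : ℕ} (A : Matrix (Fin n) (Fin n) ℝ) (S : Matrix (Fin n) (Fin n) ℝ) :
    Matrix (Fin n) (Fin n × Fin n) ℝ :=
  fun i p => (A ^ (p.1 : ℕ) * S) i p.2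

/-- The square root of a positive semidefinite matrix, as `Matrix.PosSemidef.sqrt` was
defined in the older Mathlib (since removed). -/
def Matrix.PosSemidef.sqrt {n : Type*} [Fintype n] [DecidableEq n]
    {A : Matrix n n ℝ} (hA : A.PosSemidef) : Matrix n n ℝ :=
  hA.1.eigenvectorUnitary.1 * diagonal ((↑) ∘ (√·) ∘ hA.1.eigenvalues) *
  (star hA.1.eigenvectorUnitary : Matrix n n ℝ)

/-- The deterministic covariance recursion driven by the binary sequence `z`:
`P 0 = S`, `P (k+1) = g (P k)` if `z k` holds, `P (k+1) = h (P k)` otherwise. -/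
def detFilt {n m : ℕ} (A Q : Matrix (Fin n) (Fin n) ℝ) (C : Matrix (Fin m) (Fin n) ℝ)
    (R : Matrix (Fin m) (Fin m) ℝ) (z : ℕ → Bool) (S : Matrix (Fin n) (Fin n) ℝ) :
    ℕ → Matrix (Fin n) (Fin n) ℝ
  | 0 => S
  | k + 1 =>
      if z k then gOp A Q C R (detFilt A Q C R z S k)
      else hOp A Q (detFilt A Q C R z S k)

lemma Matrix.PosSemidef.sqrt_mul_self {n : Type*} [Fintype n] [DecidableEq n]
    {A : Matrix n n ℝ} (hA : A.PosSemidef) : hA.sqrt * hA.sqrt = A := by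
  have hU : (star hA.1.eigenvectorUnitary : Matrix n n ℝ) * hA.1.eigenvectorUnitary.1 = 1 :=
    Unitary.coe_star_mul_self _
  have hD : diagonal ((↑) ∘ (√·) ∘ hA.1.eigenvalues) * diagonal ((↑) ∘ (√·) ∘ hA.1.eigenvalues)
      = diagonal (RCLike.ofReal ∘ hA.1.eigenvalues : n → ℝ) := by
    rw [diagonal_mul_diagonal]
    congr 1; funext i
    simp [Real.mul_self_sqrt (hA.eigenvalues_nonneg i)]
  conv_rhs => rw [hA.1.spectral_theorem, Unitary.conjStarAlgAut_apply]
  rw [Matrix.PosSemidef.sqrt]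
  simp only [Matrix.mul_assoc]
  rw [← Matrix.mul_assoc (star hA.1.eigenvectorUnitary : Matrix n n ℝ), hU, Matrix.one_mul,
    ← Matrix.mul_assoc (diagonal _), hD]

lemma Matrix.PosSemidef.posSemidef_sqrt {n : Type*} [Fintype n] [DecidableEq n]
    {A : Matrix n n ℝ} (hA : A.PosSemidef) : hA.sqrt.PosSemidef := by
  have hd : (diagonal ((↑) ∘ (√·) ∘ hA.1.eigenvalues) : Matrix n n ℝ).PosSemidef :=
    PosSemidef.diagonal (fun i => by simp [Real.sqrt_nonneg])
  have := hd.mul_mul_conjTranspose_same (hA.1.eigenvectorUnitary.1)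
  rw [Matrix.PosSemidef.sqrt]
  convert this using 2
  exact Matrix.star_eq_conjTranspose _

namespace RicAux

variable {n m : ℕ}

lemma psd_conj {p q : ℕ} {X : Matrix (Fin q) (Fin q) ℝ} (hX : X.PosSemidef)
    (B : Matrix (Fin p) (Fin q) ℝ) : (B * X * Bᵀ).PosSemidef := by
  simpa [conjTranspose_eq_transpose_of_trivial] using hX.mul_mul_conjTranspose_same B

lemma psd_symm {q : ℕ} {X : Matrix (Fin q) (Fin q) ℝ} (hX : X.PosSemidef) : Xᵀ = X := by
  have h := hX.isHermitian.eq
  rwa [conjTranspose_eq_transpose_of_trivial] at h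

lemma psd_smul {q : ℕ} {X : Matrix (Fin q) (Fin q) ℝ} (hX : X.PosSemidef) {c : ℝ}
    (hc : 0 ≤ c) : (c • X).PosSemidef := by
  refine PosSemidef.of_dotProduct_mulVec_nonneg ?_ fun x => ?_
  · rw [Matrix.IsHermitian, conjTranspose_smul]
    simp [psd_symm hX]
  · have h := hX.dotProduct_mulVec_nonneg x
    rw [smul_mulVec, dotProduct_smul]
    simpa using mul_nonneg hc (by simpa using h)

/-- The optimal gain. -/
def Kg (A : Matrix (Fin n) (Fin n) ℝ) (C : Matrix (Fin m) (Fin n) ℝ)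
    (R : Matrix (Fin m) (Fin m) ℝ) (X : Matrix (Fin n) (Fin n) ℝ) :
    Matrix (Fin n) (Fin m) ℝ :=
  -(A * X * Cᵀ * (C * X * Cᵀ + R)⁻¹)

/-- The affine-in-`X` operator `Φ(K, X)`. -/
def Phi (A Q : Matrix (Fin n) (Fin n) ℝ) (C : Matrix (Fin m) (Fin n) ℝ)
    (R : Matrix (Fin m) (Fin m) ℝ) (K : Matrix (Fin n) (Fin m) ℝ)
    (X : Matrix (Fin n) (Fin n) ℝ) : Matrix (Fin n) (Fin n) ℝ :=
  (A + K * C) * X * (A + K * C)ᵀ + (K * R * Kᵀ + Q)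

variable {A Q : Matrix (Fin n) (Fin n) ℝ} {C : Matrix (Fin m) (Fin n) ℝ}
  {R : Matrix (Fin m) (Fin m) ℝ}

lemma M_posDef {X : Matrix (Fin n) (Fin n) ℝ} (hX : X.PosSemidef) (hR : R.PosDef) :
    (C * X * Cᵀ + R).PosDef :=
  hR.posSemidef_add (psd_conj hX C)

/-- The master algebraic identity. -/
lemma phi_eq_gOp_add {A Q : Matrix (Fin n) (Fin n) ℝ} {C : Matrix (Fin m) (Fin n) ℝ}
    {R : Matrix (Fin m) (Fin m) ℝ} {X : Matrix (Fin n) (Fin n) ℝ}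
    (hX : X.PosSemidef) (hM : (C * X * Cᵀ + R).PosDef) (K : Matrix (Fin n) (Fin m) ℝ) :
    Phi A Q C R K X =
      gOp A Q C R X + (K - Kg A C R X) * (C * X * Cᵀ + R) * (K - Kg A C R X)ᵀ := by
  have hMd : IsUnit (C * X * Cᵀ + R).det := isUnit_iff_ne_zero.mpr hM.det_pos.ne'
  have hXt : Xᵀ = X := psd_symm hX
  have hMt : (C * X * Cᵀ + R)ᵀ = C * X * Cᵀ + R := psd_symm hM.posSemidef
  have hNt : ((C * X * Cᵀ + R)⁻¹)ᵀ = (C * X * Cᵀ + R)⁻¹ := by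
    rw [transpose_nonsing_inv, hMt]
  have hMN : (C * X * Cᵀ + R) * (C * X * Cᵀ + R)⁻¹ = 1 := mul_nonsing_inv _ hMd
  have hGt : (A * X * Cᵀ)ᵀ = C * X * Aᵀ := by
    rw [transpose_mul, transpose_mul, transpose_transpose, hXt, ← Matrix.mul_assoc]
  have h1 : (K - Kg A C R X) * (C * X * Cᵀ + R)
      = K * (C * X * Cᵀ + R) + A * X * Cᵀ := by
    rw [Kg, sub_neg_eq_add, Matrix.add_mul,
      Matrix.mul_assoc (A * X * Cᵀ) (C * X * Cᵀ + R)⁻¹ (C * X * Cᵀ + R),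
      nonsing_inv_mul _ hMd, Matrix.mul_one]
  have h2 : (K - Kg A C R X)ᵀ = Kᵀ + (C * X * Cᵀ + R)⁻¹ * (C * X * Aᵀ) := by
    rw [Kg, sub_neg_eq_add, transpose_add, transpose_mul, hNt, hGt]
  have hKey : (K - Kg A C R X) * (C * X * Cᵀ + R) * (K - Kg A C R X)ᵀ
      = K * (C * (X * (Cᵀ * Kᵀ))) + K * (R * Kᵀ) + K * (C * (X * Aᵀ))
        + A * (X * (Cᵀ * Kᵀ)) + A * (X * (Cᵀ * ((C * X * Cᵀ + R)⁻¹ * (C * (X * Aᵀ))))) := by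
    rw [h1, h2, Matrix.add_mul,
      Matrix.mul_add (K * (C * X * Cᵀ + R)) Kᵀ ((C * X * Cᵀ + R)⁻¹ * (C * X * Aᵀ)),
      Matrix.mul_add (A * X * Cᵀ) Kᵀ ((C * X * Cᵀ + R)⁻¹ * (C * X * Aᵀ)),
      Matrix.mul_assoc K (C * X * Cᵀ + R) ((C * X * Cᵀ + R)⁻¹ * (C * X * Aᵀ)),
      ← Matrix.mul_assoc (C * X * Cᵀ + R) (C * X * Cᵀ + R)⁻¹ (C * X * Aᵀ),
      hMN, Matrix.one_mul,
      Matrix.mul_add K (C * X * Cᵀ) R, Matrix.add_mul (K * (C * X * Cᵀ)) (K * R) Kᵀ]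
    simp only [Matrix.mul_assoc]
    abel
  have hPhi : Phi A Q C R K X
      = A * (X * Aᵀ) + Q + A * (X * (Cᵀ * Kᵀ)) + K * (C * (X * Aᵀ))
        + K * (C * (X * (Cᵀ * Kᵀ))) + K * (R * Kᵀ) := by
    simp only [Phi, transpose_add, transpose_mul, transpose_transpose, hXt,
      Matrix.mul_add, Matrix.add_mul, Matrix.mul_assoc]
    abel
  have hgOp : gOp A Q C R X
      = A * (X * Aᵀ) + Q - A * (X * (Cᵀ * ((C * X * Cᵀ + R)⁻¹ * (C * (X * Aᵀ))))) := by
    simp only [gOp, Matrix.mul_assoc]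
  rw [hPhi, hgOp, hKey]
  abel

lemma phi_psd {X : Matrix (Fin n) (Fin n) ℝ} (hX : X.PosSemidef) (hQ : Q.PosSemidef)
    (hR : R.PosDef) (K : Matrix (Fin n) (Fin m) ℝ) : (Phi A Q C R K X).PosSemidef :=
  (psd_conj hX _).add ((psd_conj hR.posSemidef K).add hQ)

lemma gOp_eq_phi {X : Matrix (Fin n) (Fin n) ℝ} (hX : X.PosSemidef) (hR : R.PosDef) :
    gOp A Q C R X = Phi A Q C R (Kg A C R X) X := by
  rw [phi_eq_gOp_add hX (M_posDef hX hR) (Kg A C R X)]; simp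

lemma gOp_psd {X : Matrix (Fin n) (Fin n) ℝ} (hX : X.PosSemidef) (hQ : Q.PosSemidef)
    (hR : R.PosDef) : (gOp A Q C R X).PosSemidef := by
  rw [gOp_eq_phi hX hR]; exact phi_psd hX hQ hR _

lemma gOp_le_phi {X : Matrix (Fin n) (Fin n) ℝ} (hX : X.PosSemidef) (hR : R.PosDef)
    (K : Matrix (Fin n) (Fin m) ℝ) : (Phi A Q C R K X - gOp A Q C R X).PosSemidef := by
  rw [phi_eq_gOp_add hX (M_posDef hX hR) K, add_sub_cancel_left]
  exact psd_conj (M_posDef hX hR).posSemidef _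

lemma hOp_psd {X : Matrix (Fin n) (Fin n) ℝ} (hX : X.PosSemidef) (hQ : Q.PosSemidef) :
    (hOp A Q X).PosSemidef :=
  (psd_conj hX A).add hQ

lemma phi_mono {X Y : Matrix (Fin n) (Fin n) ℝ} (hXY : (Y - X).PosSemidef)
    (K : Matrix (Fin n) (Fin m) ℝ) :
    (Phi A Q C R K Y - Phi A Q C R K X).PosSemidef := by
  have : Phi A Q C R K Y - Phi A Q C R K X = (A + K * C) * (Y - X) * (A + K * C)ᵀ := by
    simp only [Phi, Matrix.mul_sub, Matrix.sub_mul]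
    abel
  rw [this]; exact psd_conj hXY _

lemma gOp_mono {X Y : Matrix (Fin n) (Fin n) ℝ} (hX : X.PosSemidef) (hY : Y.PosSemidef)
    (hXY : (Y - X).PosSemidef) (hR : R.PosDef) :
    (gOp A Q C R Y - gOp A Q C R X).PosSemidef := by
  have h1 := phi_mono (A := A) (Q := Q) (C := C) (R := R) hXY (Kg A C R Y)
  have h2 := gOp_le_phi (A := A) (Q := Q) (C := C) hX hR (Kg A C R Y)
  have : gOp A Q C R Y - gOp A Q C R X =
      (Phi A Q C R (Kg A C R Y) Y - Phi A Q C R (Kg A C R Y) X) +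
        (Phi A Q C R (Kg A C R Y) X - gOp A Q C R X) := by
    rw [gOp_eq_phi hY hR]; abel
  rw [this]; exact h1.add h2

lemma hOp_mono {X Y : Matrix (Fin n) (Fin n) ℝ} (hXY : (Y - X).PosSemidef) :
    (hOp A Q Y - hOp A Q X).PosSemidef := by
  have : hOp A Q Y - hOp A Q X = A * (Y - X) * Aᵀ := by
    simp only [hOp, Matrix.mul_sub, Matrix.sub_mul]; abel
  rw [this]; exact psd_conj hXY _

lemma phi_smul (K : Matrix (Fin n) (Fin m) ℝ) (X : Matrix (Fin n) (Fin n) ℝ) {α : ℝ}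
    (hα : 1 ≤ α) :
    α • Phi A Q C R K X - Phi A Q C R K (α • X) = (α - 1) • (K * R * Kᵀ + Q) := by
  simp only [Phi, Matrix.mul_smul, Matrix.smul_mul, smul_add, sub_smul, one_smul]
  abel

lemma gOp_smul {X : Matrix (Fin n) (Fin n) ℝ} (hX : X.PosSemidef) (hQ : Q.PosSemidef)
    (hR : R.PosDef) {α : ℝ} (hα : 1 ≤ α) :
    (α • gOp A Q C R X - gOp A Q C R (α • X)).PosSemidef := by
  have hXα : (α • X).PosSemidef := psd_smul hX (by linarith)
  have h2 := gOp_le_phi (A := A) (Q := Q) (C := C) hXα hR (Kg A C R X)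
  have h3 : ((α - 1) • (Kg A C R X * R * (Kg A C R X)ᵀ + Q)).PosSemidef :=
    psd_smul ((psd_conj hR.posSemidef _).add hQ) (by linarith)
  have : α • gOp A Q C R X - gOp A Q C R (α • X) =
      (Phi A Q C R (Kg A C R X) (α • X) - gOp A Q C R (α • X)) +
        (α - 1) • (Kg A C R X * R * (Kg A C R X)ᵀ + Q) := by
    rw [← phi_smul (A := A) (Q := Q) (C := C) (R := R) (Kg A C R X) X hα,
      ← gOp_eq_phi hX hR]
    abel
  rw [this]; exact h2.add h3

lemma hOp_smul {X : Matrix (Fin n) (Fin n) ℝ} (hQ : Q.PosSemidef) {α : ℝ} (hα : 1 ≤ α) :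
    (α • hOp A Q X - hOp A Q (α • X)).PosSemidef := by
  have : α • hOp A Q X - hOp A Q (α • X) = (α - 1) • Q := by
    simp only [hOp, Matrix.mul_smul, Matrix.smul_mul, smul_add, sub_smul, one_smul]
    abel
  rw [this]; exact psd_smul hQ (by linarith)

end RicAux
namespace RicAux

variable {n m : ℕ} {A Q : Matrix (Fin n) (Fin n) ℝ} {C : Matrix (Fin m) (Fin n) ℝ}
  {R : Matrix (Fin m) (Fin m) ℝ} {z : ℕ → Bool}

lemma detFilt_psd (hQ : Q.PosSemidef) (hR : R.PosDef) {S : Matrix (Fin n) (Fin n) ℝ}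
    (hS : S.PosSemidef) : ∀ k, (detFilt A Q C R z S k).PosSemidef := by
  intro k
  induction k with
  | zero => exact hS
  | succ k ih =>
      rw [detFilt]
      split
      · exact gOp_psd ih hQ hR
      · exact hOp_psd ih hQ

lemma detFilt_mono (hQ : Q.PosSemidef) (hR : R.PosDef) {S S' : Matrix (Fin n) (Fin n) ℝ}
    (hS : S.PosSemidef) (hS' : S'.PosSemidef) (hle : (S' - S).PosSemidef) :
    ∀ k, (detFilt A Q C R z S' k - detFilt A Q C R z S k).PosSemidef := by
  intro k
  induction k with
  | zero => exact hle
  | succ k ih =>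
      rw [detFilt, detFilt]
      split
      · exact gOp_mono (detFilt_psd hQ hR hS k) (detFilt_psd hQ hR hS' k) ih hR
      · exact hOp_mono ih

lemma detFilt_scale (hQ : Q.PosSemidef) (hR : R.PosDef) {S : Matrix (Fin n) (Fin n) ℝ}
    (hS : S.PosSemidef) {α : ℝ} (hα : 1 ≤ α) :
    ∀ k, (α • detFilt A Q C R z S k - detFilt A Q C R z (α • S) k).PosSemidef := by
  intro k
  have hα0 : (0:ℝ) ≤ α := by linarith
  induction k with
  | zero =>
      have : α • S - α • S = (0 : Matrix (Fin n) (Fin n) ℝ) := by abel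
      simpa [detFilt, this] using (Matrix.PosSemidef.zero (n := Fin n) (R := ℝ))
  | succ k ih =>
      have hP : (detFilt A Q C R z S k).PosSemidef := detFilt_psd hQ hR hS k
      have hP' : (detFilt A Q C R z (α • S) k).PosSemidef :=
        detFilt_psd hQ hR (psd_smul hS hα0) k
      have hPα : (α • detFilt A Q C R z S k).PosSemidef := psd_smul hP hα0
      rw [detFilt, detFilt]
      split
      · have h1 := gOp_mono (A := A) (Q := Q) (C := C) hP' hPα ih hR
        have h2 := gOp_smul (A := A) (Q := Q) (C := C) hP hQ hR hα
        have : α • gOp A Q C R (detFilt A Q C R z S k)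
            - gOp A Q C R (detFilt A Q C R z (α • S) k)
            = (α • gOp A Q C R (detFilt A Q C R z S k)
                - gOp A Q C R (α • detFilt A Q C R z S k))
              + (gOp A Q C R (α • detFilt A Q C R z S k)
                - gOp A Q C R (detFilt A Q C R z (α • S) k)) := by abel
        rw [this]
        exact h2.add h1
      · have h1 := hOp_mono (A := A) (Q := Q) ih
        have h2 := hOp_smul (A := A) (X := detFilt A Q C R z S k) hQ hα
        have : α • hOp A Q (detFilt A Q C R z S k)
            - hOp A Q (detFilt A Q C R z (α • S) k)
            = (α • hOp A Q (detFilt A Q C R z S k)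
                - hOp A Q (α • detFilt A Q C R z S k))
              + (hOp A Q (α • detFilt A Q C R z S k)
                - hOp A Q (detFilt A Q C R z (α • S) k)) := by abel
        rw [this]
        exact h2.add h1

lemma detFilt_shift (S : Matrix (Fin n) (Fin n) ℝ) (N : ℕ) :
    ∀ k, detFilt A Q C R z S (N + k)
      = detFilt A Q C R (fun i => z (N + i)) (detFilt A Q C R z S N) k := by
  intro k
  induction k with
  | zero => rfl
  | succ k ih =>
      show detFilt A Q C R z S ((N + k) + 1) = _
      rw [detFilt, detFilt, ih]

end RicAux
namespace RicAux

variable {n m : ℕ} {A Q : Matrix (Fin n) (Fin n) ℝ} {C : Matrix (Fin m) (Fin n) ℝ}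
  {R : Matrix (Fin m) (Fin m) ℝ} {z : ℕ → Bool}

lemma dot_psd {q : ℕ} {X : Matrix (Fin q) (Fin q) ℝ} (hX : X.PosSemidef) (x : Fin q → ℝ) :
    0 ≤ x ⬝ᵥ X *ᵥ x := by simpa using hX.dotProduct_mulVec_nonneg x

lemma dot_zero {q : ℕ} {X : Matrix (Fin q) (Fin q) ℝ} (hX : X.PosSemidef) (x : Fin q → ℝ)
    (h : x ⬝ᵥ X *ᵥ x = 0) : X *ᵥ x = 0 :=
  (hX.dotProduct_mulVec_zero_iff x).mp (by simpa using h)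

lemma dot_conj {p q : ℕ} (B : Matrix (Fin p) (Fin q) ℝ) (X : Matrix (Fin q) (Fin q) ℝ)
    (v : Fin p → ℝ) :
    v ⬝ᵥ (B * X * Bᵀ) *ᵥ v = (Bᵀ *ᵥ v) ⬝ᵥ X *ᵥ (Bᵀ *ᵥ v) := by
  rw [← mulVec_mulVec, ← mulVec_mulVec, dotProduct_mulVec, ← mulVec_transpose]

lemma psd_add_ker {q : ℕ} {X Y : Matrix (Fin q) (Fin q) ℝ} (hX : X.PosSemidef)
    (hY : Y.PosSemidef) {v : Fin q → ℝ} (h : (X + Y) *ᵥ v = 0) :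
    X *ᵥ v = 0 ∧ Y *ᵥ v = 0 := by
  have h0 : v ⬝ᵥ (X + Y) *ᵥ v = 0 := by rw [h, dotProduct_zero]
  rw [add_mulVec, dotProduct_add] at h0
  have ha := dot_psd hX v
  have hb := dot_psd hY v
  exact ⟨dot_zero hX v (by linarith), dot_zero hY v (by linarith)⟩

lemma conj_ker {q p : ℕ} {X : Matrix (Fin q) (Fin q) ℝ} (hX : X.PosSemidef)
    (B : Matrix (Fin p) (Fin q) ℝ) {v : Fin p → ℝ} (h : (B * X * Bᵀ) *ᵥ v = 0) :
    X *ᵥ (Bᵀ *ᵥ v) = 0 := by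
  have h0 : v ⬝ᵥ (B * X * Bᵀ) *ᵥ v = 0 := by rw [h, dotProduct_zero]
  rw [dot_conj] at h0
  exact dot_zero hX _ h0

lemma hOp_ker {X : Matrix (Fin n) (Fin n) ℝ} (hX : X.PosSemidef) (hQ : Q.PosSemidef)
    {v : Fin n → ℝ} (h : hOp A Q X *ᵥ v = 0) :
    Q *ᵥ v = 0 ∧ X *ᵥ (Aᵀ *ᵥ v) = 0 := by
  obtain ⟨h1, h2⟩ := psd_add_ker (psd_conj hX A) hQ h
  exact ⟨h2, conj_ker hX A h1⟩

lemma gOp_ker {X : Matrix (Fin n) (Fin n) ℝ} (hX : X.PosSemidef) (hQ : Q.PosSemidef)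
    (hR : R.PosDef) {v : Fin n → ℝ} (h : gOp A Q C R X *ᵥ v = 0) :
    Q *ᵥ v = 0 ∧ X *ᵥ (Aᵀ *ᵥ v) = 0 := by
  rw [gOp_eq_phi hX hR, Phi] at h
  obtain ⟨h1, h2⟩ := psd_add_ker (psd_conj hX _) ((psd_conj hR.posSemidef _).add hQ) h
  obtain ⟨h3, h4⟩ := psd_add_ker (psd_conj hR.posSemidef _) hQ h2
  -- from the `K R Kᵀ` part : Kᵀ *ᵥ v = 0
  have h5 : (Kg A C R X)ᵀ *ᵥ v = 0 := by
    by_contra hne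
    have := hR.dotProduct_mulVec_pos hne
    have h6 : v ⬝ᵥ (Kg A C R X * R * (Kg A C R X)ᵀ) *ᵥ v = 0 := by
      rw [h3, dotProduct_zero]
    rw [dot_conj] at h6
    simp only [star_trivial] at this
    exact absurd h6 (ne_of_gt this)
  have h7 := conj_ker hX (A + Kg A C R X * C) h1
  rw [transpose_add, add_mulVec, transpose_mul, ← mulVec_mulVec, h5, mulVec_zero,
    add_zero] at h7
  exact ⟨h4, h7⟩

lemma detFilt_ker (hQ : Q.PosSemidef) (hR : R.PosDef) {S : Matrix (Fin n) (Fin n) ℝ}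
    (hS : S.PosSemidef) :
    ∀ k (v : Fin n → ℝ), detFilt A Q C R z S k *ᵥ v = 0 →
      ∀ j, j < k → Q *ᵥ ((Aᵀ) ^ j *ᵥ v) = 0 := by
  intro k
  induction k with
  | zero => intro v _ j hj; omega
  | succ k ih =>
      intro v hv j hj
      rw [detFilt] at hv
      have hP : (detFilt A Q C R z S k).PosSemidef := detFilt_psd hQ hR hS k
      have hstep : Q *ᵥ v = 0 ∧ detFilt A Q C R z S k *ᵥ (Aᵀ *ᵥ v) = 0 := by
        split at hv
        · exact gOp_ker hP hQ hR hv
        · exact hOp_ker hP hQ hv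
      match j with
      | 0 => simpa using hstep.1
      | j + 1 =>
          rw [pow_succ, ← mulVec_mulVec]
          exact ih (Aᵀ *ᵥ v) hstep.2 j (by omega)

lemma sqrt_ker (hQ : Q.PosSemidef) {w : Fin n → ℝ} (h : Q *ᵥ w = 0) :
    hQ.sqrt *ᵥ w = 0 := by
  have h0 : w ⬝ᵥ Q *ᵥ w = 0 := by rw [h, dotProduct_zero]
  have hs : hQ.sqrt * hQ.sqrt = Q := hQ.sqrt_mul_self
  rw [← hs, ← mulVec_mulVec, dotProduct_mulVec, ← mulVec_transpose,
    psd_symm hQ.posSemidef_sqrt] at h0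
  exact dotProduct_self_eq_zero.mp h0

lemma psd_posDef_of_ker {q : ℕ} {P : Matrix (Fin q) (Fin q) ℝ} (hP : P.PosSemidef)
    (h : ∀ v, P *ᵥ v = 0 → v = 0) : P.PosDef := by
  refine PosDef.of_dotProduct_mulVec_pos hP.1 fun x hx => ?_
  have h1 : 0 ≤ x ⬝ᵥ P *ᵥ x := dot_psd hP x
  have h2 : x ⬝ᵥ P *ᵥ x ≠ 0 := fun heq => hx (h x (dot_zero hP x heq))
  simpa using lt_of_le_of_ne h1 (Ne.symm h2)

lemma detFilt_zero_posDef (hQ : Q.PosSemidef) (hR : R.PosDef)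
    (hCtrb : (ctrbMat A hQ.sqrt).rank = n) :
    (detFilt A Q C R z 0 n).PosDef := by
  refine psd_posDef_of_ker (detFilt_psd hQ hR Matrix.PosSemidef.zero n) (fun v hv => ?_)
  have hj := detFilt_ker hQ hR Matrix.PosSemidef.zero n v hv
  have hker : (ctrbMat A hQ.sqrt)ᵀ *ᵥ v = 0 := by
    funext p
    have hsq : hQ.sqrt *ᵥ ((Aᵀ) ^ (p.1 : ℕ) *ᵥ v) = 0 :=
      sqrt_ker hQ (hj (p.1 : ℕ) p.1.isLt)
    have : ((ctrbMat A hQ.sqrt)ᵀ *ᵥ v) p = (hQ.sqrt *ᵥ ((Aᵀ) ^ (p.1 : ℕ) *ᵥ v)) p.2 := by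
      rw [mulVec_mulVec]
      have hfold : hQ.sqrt * (Aᵀ) ^ (p.1 : ℕ) = (A ^ (p.1 : ℕ) * hQ.sqrt)ᵀ := by
        rw [transpose_mul, transpose_pow, psd_symm hQ.posSemidef_sqrt]
      rw [hfold]
      simp [ctrbMat, mulVec, dotProduct, transpose_apply]
    rw [this, hsq]
    simp
  -- rank argument
  have hrank : ((ctrbMat A hQ.sqrt)ᵀ).rank = n := by
    rw [rank_transpose, hCtrb]
  set f := ((ctrbMat A hQ.sqrt)ᵀ).mulVecLin with hf
  have hmem : v ∈ LinearMap.ker f := by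
    rw [LinearMap.mem_ker, hf, Matrix.mulVecLin_apply]
    exact hker
  have hfin : Module.finrank ℝ (LinearMap.range f) + Module.finrank ℝ (LinearMap.ker f)
      = Module.finrank ℝ (Fin n → ℝ) := LinearMap.finrank_range_add_finrank_ker f
  have hrange : Module.finrank ℝ (LinearMap.range f) = n := hrank
  have hdim : Module.finrank ℝ (Fin n → ℝ) = n := by simp
  have hker0 : Module.finrank ℝ (LinearMap.ker f) = 0 := by omega
  have : LinearMap.ker f = ⊥ := Submodule.finrank_eq_zero.mp hker0
  rw [this] at hmem
  simpa using hmem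

end RicAux
namespace RicAux

variable {n m : ℕ}

lemma psd_trace_nonneg {q : ℕ} {P : Matrix (Fin q) (Fin q) ℝ} (hP : P.PosSemidef) :
    0 ≤ P.trace := by
  rw [Matrix.trace]
  refine Finset.sum_nonneg fun i _ => ?_
  have := dot_psd hP (Pi.single i 1)
  simpa [Matrix.diag, dotProduct, mulVec, Pi.single_apply, Finset.sum_ite_eq,
    Finset.sum_ite_eq'] using this

lemma trace_mono {q : ℕ} {X Y : Matrix (Fin q) (Fin q) ℝ} (h : (Y - X).PosSemidef) :
    X.trace ≤ Y.trace := by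
  have h0 := psd_trace_nonneg h
  rw [Matrix.trace_sub] at h0
  linarith

lemma psd_le_smul_one {q : ℕ} {P : Matrix (Fin q) (Fin q) ℝ} (hP : P.PosSemidef) :
    ∃ c : ℝ, 0 < c ∧ ((c • (1 : Matrix (Fin q) (Fin q) ℝ)) - P).PosSemidef := by
  set c : ℝ := (∑ i, ∑ j, |P i j|) + 1 with hc
  have habs : 0 ≤ ∑ i, ∑ j, |P i j| :=
    Finset.sum_nonneg fun i _ => Finset.sum_nonneg fun j _ => abs_nonneg _
  refine ⟨c, by linarith, PosSemidef.of_dotProduct_mulVec_nonneg ?_ fun x => ?_⟩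
  · show ((c • (1 : Matrix (Fin q) (Fin q) ℝ)) - P)ᴴ = _
    rw [conjTranspose_sub, conjTranspose_smul, conjTranspose_one, hP.1.eq]
    simp
  · have hquad : x ⬝ᵥ ((c • (1 : Matrix (Fin q) (Fin q) ℝ)) - P) *ᵥ x
        = c * (x ⬝ᵥ x) - x ⬝ᵥ P *ᵥ x := by
      rw [sub_mulVec, dotProduct_sub, smul_mulVec, one_mulVec, dotProduct_smul]
      simp
    have hs : ∀ i, x i ^ 2 ≤ x ⬝ᵥ x := by
      intro i
      rw [dotProduct]
      have : x i ^ 2 = x i * x i := by ring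
      rw [this]
      exact Finset.single_le_sum (f := fun j => x j * x j)
        (fun j _ => mul_self_nonneg _) (Finset.mem_univ i)
    have hbound : x ⬝ᵥ P *ᵥ x ≤ (∑ i, ∑ j, |P i j|) * (x ⬝ᵥ x) := by
      have hterm : ∀ i j, x i * (P i j * x j) ≤ |P i j| * (x ⬝ᵥ x) := by
        intro i j
        have h1 : |x i| * |x j| ≤ x ⬝ᵥ x := by
          nlinarith [hs i, hs j, abs_nonneg (x i), abs_nonneg (x j), sq_abs (x i),
            sq_abs (x j)]
        calc x i * (P i j * x j) ≤ |x i * (P i j * x j)| := le_abs_self _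
          _ = |P i j| * (|x i| * |x j|) := by rw [abs_mul, abs_mul]; ring
          _ ≤ |P i j| * (x ⬝ᵥ x) := mul_le_mul_of_nonneg_left h1 (abs_nonneg _)
      calc x ⬝ᵥ P *ᵥ x = ∑ i, ∑ j, x i * (P i j * x j) := by
            simp [dotProduct, mulVec, Finset.mul_sum]
        _ ≤ ∑ i, ∑ j, |P i j| * (x ⬝ᵥ x) :=
            Finset.sum_le_sum fun i _ => Finset.sum_le_sum fun j _ => hterm i j
        _ = (∑ i, ∑ j, |P i j|) * (x ⬝ᵥ x) := by rw [Finset.sum_mul]; simp [Finset.sum_mul]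
    have hxx : 0 ≤ x ⬝ᵥ x := by
      rw [dotProduct]; exact Finset.sum_nonneg fun i _ => mul_self_nonneg _
    simp only [star_trivial]
    rw [hquad, hc]
    nlinarith
  
lemma pd_ge_smul_one {q : ℕ} {P : Matrix (Fin q) (Fin q) ℝ} (hP : P.PosDef) :
    ∃ δ : ℝ, 0 < δ ∧ (P - δ • (1 : Matrix (Fin q) (Fin q) ℝ)).PosSemidef := by
  have hPi : (P⁻¹).PosDef := hP.inv
  obtain ⟨c, hc, hcP⟩ := psd_le_smul_one hPi.posSemidef
  set S := hP.posSemidef.sqrt with hSdef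
  have hSS : S * S = P := hP.posSemidef.sqrt_mul_self
  have hSt : Sᵀ = S := psd_symm hP.posSemidef.posSemidef_sqrt
  have hdet : IsUnit S.det := by
    have : S.det * S.det = P.det := by rw [← det_mul, hSS]
    have hPd := hP.det_pos
    refine isUnit_iff_ne_zero.mpr fun h0 => ?_
    rw [h0, mul_zero] at this
    exact absurd this.symm hPd.ne'
  have hconj := psd_conj hcP S
  have hinv : S * P⁻¹ * S = 1 := by
    rw [← hSS, Matrix.mul_inv_rev, ← Matrix.mul_assoc S S⁻¹ S⁻¹,
      mul_nonsing_inv _ hdet, Matrix.one_mul, nonsing_inv_mul _ hdet]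
  have hid : S * (c • (1 : Matrix (Fin q) (Fin q) ℝ) - P⁻¹) * Sᵀ = c • P - 1 := by
    rw [hSt, Matrix.mul_sub, Matrix.sub_mul, Matrix.mul_smul, Matrix.mul_one,
      Matrix.smul_mul, hSS, hinv]
  have hpsd : (c • P - (1 : Matrix (Fin q) (Fin q) ℝ)).PosSemidef := by
    rw [← hid]; exact hconj
  refine ⟨c⁻¹, by positivity, ?_⟩
  have heq : P - c⁻¹ • (1 : Matrix (Fin q) (Fin q) ℝ)
      = c⁻¹ • (c • P - (1 : Matrix (Fin q) (Fin q) ℝ)) := by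
    rw [smul_sub, smul_smul, inv_mul_cancel₀ hc.ne', one_smul]
  rw [heq]
  exact psd_smul hpsd (by positivity)

lemma exists_scale {q : ℕ} {P1 P2 : Matrix (Fin q) (Fin q) ℝ} (hP1 : P1.PosDef)
    (hP2 : P2.PosSemidef) :
    ∃ α : ℝ, 1 ≤ α ∧ (α • P1 - P2).PosSemidef := by
  obtain ⟨c, hc, hcP⟩ := psd_le_smul_one hP2
  obtain ⟨δ, hδ, hδP⟩ := pd_ge_smul_one hP1
  refine ⟨max 1 (c / δ), le_max_left _ _, ?_⟩
  set α := max 1 (c / δ) with hα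
  have hα1 : (1:ℝ) ≤ α := le_max_left _ _
  have hα0 : (0:ℝ) ≤ α := by linarith
  have hαδ : c ≤ α * δ := by
    have : c / δ ≤ α := le_max_right _ _
    calc c = (c / δ) * δ := by field_simp
    _ ≤ α * δ := by nlinarith
  have hid : α • P1 - P2
      = α • (P1 - δ • (1 : Matrix (Fin q) (Fin q) ℝ))
        + ((α * δ - c) • (1 : Matrix (Fin q) (Fin q) ℝ)
          + (c • (1 : Matrix (Fin q) (Fin q) ℝ) - P2)) := by
    rw [smul_sub, smul_smul, sub_smul]
    abel
  rw [hid]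
  exact (psd_smul hδP hα0).add ((psd_smul Matrix.PosSemidef.one (by linarith)).add hcP)

end RicAux
namespace RicAux

variable {n m : ℕ} {A Q : Matrix (Fin n) (Fin n) ℝ} {C : Matrix (Fin m) (Fin n) ℝ}
  {R : Matrix (Fin m) (Fin m) ℝ}

lemma trace_comp (hQ : Q.PosSemidef) (hR : R.PosDef) {T1 T2 : Matrix (Fin n) (Fin n) ℝ}
    (hT1 : T1.PosSemidef) (hT2 : T2.PosSemidef) {α : ℝ} (hα1 : 1 ≤ α)
    (hle : (α • T1 - T2).PosSemidef) (w : ℕ → Bool) (k : ℕ) :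
    (detFilt A Q C R w T2 k).trace ≤ α * (detFilt A Q C R w T1 k).trace := by
  have hα0 : (0:ℝ) ≤ α := by linarith
  have hm := detFilt_mono (A := A) (C := C) (z := w) hQ hR hT2 (psd_smul hT1 hα0) hle k
  have hsc := detFilt_scale (A := A) (C := C) (z := w) hQ hR hT1 hα1 k
  have hsum : (α • detFilt A Q C R w T1 k - detFilt A Q C R w T2 k).PosSemidef := by
    have e : α • detFilt A Q C R w T1 k - detFilt A Q C R w T2 k
        = (α • detFilt A Q C R w T1 k - detFilt A Q C R w (α • T1) k)
          + (detFilt A Q C R w (α • T1) k - detFilt A Q C R w T2 k) := by abel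
    rw [e]
    exact hsc.add hm
  have := trace_mono hsum
  rwa [Matrix.trace_smul, smul_eq_mul] at this

lemma main_dir (hQ : Q.PosSemidef) (hCtrb : (ctrbMat A hQ.sqrt).rank = n) (hR : R.PosDef)
    (z : ℕ → Bool) {S1 S2 : Matrix (Fin n) (Fin n) ℝ}
    (hS1 : S1.PosSemidef) (hS2 : S2.PosSemidef)
    (h : Filter.atTop.liminf (fun k => ((detFilt A Q C R z S1 k).trace : EReal)) < ⊤) :
    Filter.atTop.liminf (fun k => ((detFilt A Q C R z S2 k).trace : EReal)) < ⊤ := by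
  have hV : (detFilt A Q C R z 0 n).PosDef := detFilt_zero_posDef hQ hR hCtrb
  have h01 : (S1 - 0).PosSemidef := by simpa using hS1
  have hmono := detFilt_mono (A := A) (C := C) (z := z) hQ hR Matrix.PosSemidef.zero hS1 h01 n
  have hP1 : (detFilt A Q C R z S1 n).PosDef := by
    have e : detFilt A Q C R z S1 n
        = detFilt A Q C R z 0 n + (detFilt A Q C R z S1 n - detFilt A Q C R z 0 n) := by
      abel
    rw [e]
    exact hV.add_posSemidef hmono
  have hP2 : (detFilt A Q C R z S2 n).PosSemidef := detFilt_psd hQ hR hS2 n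
  obtain ⟨α, hα1, hαP⟩ := exists_scale hP1 hP2
  have hα0 : (0:ℝ) ≤ α := by linarith
  have hcomp : ∀ k, (detFilt A Q C R z S2 (n + k)).trace
      ≤ α * (detFilt A Q C R z S1 (n + k)).trace := by
    intro k
    rw [detFilt_shift S2 n k, detFilt_shift S1 n k]
    exact trace_comp hQ hR hP1.posSemidef hP2 hα1 hαP _ k
  obtain ⟨b, hb1, -⟩ := EReal.exists_between_coe_real h
  have hfreq : ∃ᶠ k in Filter.atTop, ((detFilt A Q C R z S1 k).trace : EReal) < (b : EReal) :=
    Filter.frequently_lt_of_liminf_lt (by isBoundedDefault) hb1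
  have hfreq2 : ∃ᶠ k in Filter.atTop,
      ((detFilt A Q C R z S2 k).trace : EReal) ≤ ((α * b : ℝ) : EReal) := by
    refine (hfreq.and_eventually (Filter.eventually_ge_atTop n)).mono ?_
    rintro k ⟨hk1, hk2⟩
    have ht1 : (detFilt A Q C R z S1 k).trace < b := by exact_mod_cast hk1
    have hc := hcomp (k - n)
    rw [Nat.add_sub_cancel' hk2] at hc
    have h2 : (detFilt A Q C R z S2 k).trace ≤ α * b := by nlinarith
    exact_mod_cast h2
  calc Filter.atTop.liminf (fun k => ((detFilt A Q C R z S2 k).trace : EReal))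
      ≤ ((α * b : ℝ) : EReal) := Filter.liminf_le_of_frequently_le hfreq2
    _ < ⊤ := EReal.coe_lt_top _

end RicAux

/-- Whether `liminf Tr(Pₖ) < ∞` for the deterministic Riccati recursion does not depend on
the (positive semidefinite) initial condition. -/
theorem liminf_trace_bounded_indep_init
    {n m : ℕ} (hn : 0 < n) (hm : 0 < m)
    (A : Matrix (Fin n) (Fin n) ℝ) (hA : IsUnit A.det)
    (C : Matrix (Fin m) (Fin n) ℝ) (hObs : (obsMat C A n).rank = n)
    (Q : Matrix (Fin n) (Fin n) ℝ) (hQ : Q.PosSemidef)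
    (hCtrb : (ctrbMat A hQ.sqrt).rank = n)
    (R : Matrix (Fin m) (Fin m) ℝ) (hR : R.PosDef)
    (z : ℕ → Bool)
    (S1 S2 : Matrix (Fin n) (Fin n) ℝ) (hS1 : S1.PosSemidef) (hS2 : S2.PosSemidef) :
    atTop.liminf (fun k => ((detFilt A Q C R z S1 k).trace : EReal)) < ⊤ ↔
      atTop.liminf (fun k => ((detFilt A Q C R z S2 k).trace : EReal)) < ⊤ :=
  ⟨RicAux.main_dir hQ hCtrb hR z hS1 hS2, RicAux.main_dir hQ hCtrb hR z hS2 hS1⟩
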